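/- For positive integers n and r with 2r < n, the rational expression d_{n,2r} = ∏_{i=0}^{n-2r-1} ((n+i)! · i!) / ((2r+i)! · (n-2r+i)!) is a positive integer. -/

import Mathlib

open Nat Finset

/-- `a / q` for `a < 3q` in terms of indicators. -/
private lemma div3 {q a : ℕ} (hq : 0 < q) (ha : a < 3 * q) :
    a / q = (if q ≤ a then 1 else 0) + (if 2 * q ≤ a then 1 else 0) := by
  rcases lt_or_ge a q with h | h
  · simp [Nat.div_eq_of_lt h, Nat.not_le.2 h, Nat.not_le.2 (by omega : a < 2 * q)]
  rcases lt_or_ge a (2 * q) with h2 | h2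
  · have h1 : a / q = 1 := Nat.div_eq_of_lt_le (by omega) (by omega)
    rw [h1]; simp [h, Nat.not_le.2 h2]
  · have h1 : a / q = 2 := Nat.div_eq_of_lt_le (by omega) (by omega)
    rw [h1]; simp [h, h2]

/-- closed form for the window sum when everything is small. -/
private lemma closedForm {q : ℕ} (hq : 0 < q) :
    ∀ m t : ℕ, m ≤ q → t ≤ 2 * q →
      ∑ i ∈ range m, (t + i) / q = (m - (q - t)) + (m - (2 * q - t)) := by
  intro m
  induction m with
  | zero => intro t _ _; simp
  | succ m ih =>
    intro t hm ht
    rw [Finset.sum_range_succ, ih t (by omega) ht, div3 hq (by omega)]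
    split_ifs <;> omega

/-- Hermite identity: sum over a full period. -/
private lemma hermite {q : ℕ} (hq : 0 < q) : ∀ t : ℕ, ∑ i ∈ range q, (t + i) / q = t := by
  intro t
  induction t using Nat.strong_induction_on with
  | _ t ih =>
    rcases lt_or_ge t q with h | h
    · rw [closedForm hq q t le_rfl (by omega)]; omega
    · have ht : t = (t - q) + q := by omega
      rw [ht]
      have : ∀ i ∈ range q, (t - q + q + i) / q = (t - q + i) / q + 1 := by
        intro i _
        rw [show t - q + q + i = (t - q + i) + q by omega, Nat.add_div_right _ hq]
      rw [Finset.sum_congr rfl this, Finset.sum_add_distrib, Finset.sum_const, card_range,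
        ih (t - q) (by omega)]
      simp

/-- period shift of the window sum. -/
private lemma periodShift {q : ℕ} (hq : 0 < q) (m t : ℕ) :
    ∑ i ∈ range m, (t + q + i) / q = (∑ i ∈ range m, (t + i) / q) + m := by
  have : ∀ i ∈ range m, (t + q + i) / q = (t + i) / q + 1 := by
    intro i _
    rw [show t + q + i = (t + i) + q by omega, Nat.add_div_right _ hq]
  rw [Finset.sum_congr rfl this, Finset.sum_add_distrib, Finset.sum_const, card_range,
    smul_eq_mul, mul_one]

/-- splitting off a full period of the window. -/
private lemma windowSplit {q : ℕ} (hq : 0 < q) (m t : ℕ) :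
    ∑ i ∈ range (q + m), (t + i) / q = t + (∑ i ∈ range m, (t + i) / q) + m := by
  rw [Finset.sum_range_add, hermite hq t]
  have : ∀ i ∈ range m, (t + (q + i)) / q = (t + i) / q + 1 := by
    intro i _
    rw [show t + (q + i) = (t + i) + q by omega, Nat.add_div_right _ hq]
  rw [Finset.sum_congr rfl this, Finset.sum_add_distrib, Finset.sum_const, card_range,
    smul_eq_mul, mul_one, add_assoc]

/-- the superadditivity of the window sum. -/
private lemma superadd {q : ℕ} (hq : 0 < q) :
    ∀ N m x y : ℕ, m + x + y ≤ N →
      (∑ i ∈ range m, (x + i) / q) + (∑ i ∈ range m, (y + i) / q) ≤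
        (∑ i ∈ range m, (x + y + i) / q) + ∑ i ∈ range m, (0 + i) / q := by
  intro N
  induction N with
  | zero =>
    intro m x y hN
    have hm : m = 0 := by omega
    subst hm
    simp
  | succ N ih =>
    intro m x y hN
    rcases le_or_gt q x with hx | hx
    · have h1 := periodShift hq m (x - q)
      rw [show x - q + q = x by omega] at h1
      have h2 := periodShift hq m (x - q + y)
      rw [show x - q + y + q = x + y by omega] at h2
      rw [h1, h2]
      have := ih m (x - q) y (by omega)
      omega
    rcases le_or_gt q y with hy | hy
    · have h1 := periodShift hq m (y - q)
      rw [show y - q + q = y by omega] at h1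
      have h2 := periodShift hq m (x + (y - q))
      rw [show x + (y - q) + q = x + y by omega] at h2
      rw [h1, h2]
      have := ih m x (y - q) (by omega)
      omega
    rcases le_or_gt q m with hm | hm
    · have hme : m = q + (m - q) := by omega
      rw [hme, windowSplit hq, windowSplit hq, windowSplit hq, windowSplit hq]
      have := ih (m - q) x y (by omega)
      omega
    · -- core case: everything < q
      rw [closedForm hq m x (by omega) (by omega), closedForm hq m y (by omega) (by omega),
        closedForm hq m (x + y) (by omega) (by omega), closedForm hq m 0 (by omega) (by omega)]
      omega

/-- Key inequality per prime power. -/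
private lemma keyIneq {q : ℕ} (hq : 0 < q) (m k : ℕ) :
    ∑ i ∈ range m, ((k + i) / q + (m + i) / q) ≤
      ∑ i ∈ range m, ((k + m + i) / q + i / q) := by
  rw [Finset.sum_add_distrib, Finset.sum_add_distrib]
  have := superadd hq (m + k + m) m k m le_rfl
  simpa using this

/-- The divisibility at the heart of the statement. -/
private lemma keyDvd (k m : ℕ) :
    (∏ i ∈ range m, ((k + i)! * (m + i)!)) ∣ ∏ i ∈ range m, ((k + m + i)! * i !) := by
  have hBne : (∏ i ∈ range m, ((k + i)! * (m + i)!)) ≠ 0 :=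
    Finset.prod_ne_zero_iff.2 fun i _ => Nat.mul_ne_zero (factorial_ne_zero _) (factorial_ne_zero _)
  have hAne : (∏ i ∈ range m, ((k + m + i)! * i !)) ≠ 0 :=
    Finset.prod_ne_zero_iff.2 fun i _ => Nat.mul_ne_zero (factorial_ne_zero _) (factorial_ne_zero _)
  rw [← Nat.factorization_le_iff_dvd hBne hAne]
  rw [Finsupp.le_def]
  intro p
  by_cases hp : p.Prime
  · haveI : Fact p.Prime := ⟨hp⟩
    have hfac : ∀ (f : ℕ → ℕ) (hf : ∀ i, f i ≠ 0),
        ((∏ i ∈ range m, f i).factorization) p = ∑ i ∈ range m, (f i).factorization p := by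
      intro f hf
      rw [Nat.factorization_prod fun i _ => hf i]
      exact Finset.sum_apply' p
    set b := k + 2 * m + 1 with hb
    have hleg : ∀ t : ℕ, t ≤ k + 2 * m → (t !).factorization p = ∑ j ∈ Finset.Ico 1 b, t / p ^ j := by
      intro t ht
      rw [Nat.factorization_def _ hp]
      exact padicValNat_factorial (lt_of_le_of_lt (Nat.log_le_self p t) (by omega))
    rw [hfac _ (fun i => Nat.mul_ne_zero (factorial_ne_zero _) (factorial_ne_zero _)),
      hfac _ (fun i => Nat.mul_ne_zero (factorial_ne_zero _) (factorial_ne_zero _))]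
    have hA : ∀ i ∈ range m, ((( k + m + i)! * i !).factorization) p
        = ∑ j ∈ Finset.Ico 1 b, ((k + m + i) / p ^ j + i / p ^ j) := by
      intro i hi
      rw [Finset.mem_range] at hi
      rw [Nat.factorization_mul (factorial_ne_zero _) (factorial_ne_zero _), Finsupp.add_apply,
        hleg (k + m + i) (by omega), hleg i (by omega), ← Finset.sum_add_distrib]
    have hB : ∀ i ∈ range m, ((( k + i)! * (m + i)!).factorization) p
        = ∑ j ∈ Finset.Ico 1 b, ((k + i) / p ^ j + (m + i) / p ^ j) := by
      intro i hi
      rw [Finset.mem_range] at hi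
      rw [Nat.factorization_mul (factorial_ne_zero _) (factorial_ne_zero _), Finsupp.add_apply,
        hleg (k + i) (by omega), hleg (m + i) (by omega), ← Finset.sum_add_distrib]
    rw [Finset.sum_congr rfl hA, Finset.sum_congr rfl hB, Finset.sum_comm, Finset.sum_comm (s := range m)]
    refine Finset.sum_le_sum fun j _ => ?_
    exact keyIneq (Nat.pow_pos (n := j) hp.pos) m k
  · simp [Nat.factorization_eq_zero_of_not_prime _ hp]

/-- the rational expression `d_{n,2r}` is a positive integer. -/
theorem stmt16 (n r : ℕ) (hn : 0 < n) (hr : 0 < r) (hrn : 2 * r < n) :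
    ∃ d : ℕ, 0 < d ∧
      (d : ℚ) = ∏ i ∈ Finset.range (n - 2 * r),
        (((n + i)! * i ! : ℚ) / ((2 * r + i)! * (n - 2 * r + i)!)) := by
  set k := 2 * r with hk
  set m := n - 2 * r with hm
  have hkm : k + m = n := by omega
  set A := ∏ i ∈ range m, ((n + i)! * i !) with hA
  set B := ∏ i ∈ range m, ((k + i)! * (m + i)!) with hB
  have hdvd : B ∣ A := by
    rw [hA, hB]
    have h := keyDvd k m
    rwa [hkm] at h
  have hBpos : 0 < B :=
    Finset.prod_pos fun i _ => Nat.mul_pos (factorial_pos _) (factorial_pos _)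
  have hApos : 0 < A :=
    Finset.prod_pos fun i _ => Nat.mul_pos (factorial_pos _) (factorial_pos _)
  refine ⟨A / B, Nat.div_pos (Nat.le_of_dvd hApos hdvd) hBpos, ?_⟩
  rw [Nat.cast_div hdvd (by exact_mod_cast hBpos.ne')]
  rw [Finset.prod_div_distrib]
  congr 1
  · rw [hA, Nat.cast_prod]
    push_cast
    rfl
  · rw [hB, Nat.cast_prod]
    push_cast
    rfl
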